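/- Let μ > 0, α > 0, and let f solve μ f'' + f' + α f = 0 with f(0) = 0 and f'(0) = 1/μ. Define, for a Hilbert space H with orthonormal basis (e_k) and eigenvalue sequence (α_k), the operator T(t) on H by T(t) e_k = f_k(t) e_k where f_k solves μ f_k'' + f_k' + α_k f_k = 0, f_k(0)=0, f_k'(0)=1/μ. Then for every t ≥ 0, the operator norm ‖T(t)‖_{L(H)} ≤ 4. -/

import Mathlib

open Real Set

lemma aux_upper (μ : ℝ) (hμ : 0 < μ) (g g' : ℝ → ℝ)
    (hg : ∀ t, 0 ≤ t → HasDerivAt g (g' t) t)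
    (hb : ∀ t, 0 ≤ t → g t + μ * g' t ≤ 1)
    (h0 : g 0 = 0) : ∀ t, 0 ≤ t → g t ≤ 1 := by
  set F : ℝ → ℝ := fun t => Real.exp (t / μ) * (1 - g t) with hF
  have hFd : ∀ t ∈ Ici (0:ℝ), HasDerivAt F
      (Real.exp (t / μ) * (1 / μ) * (1 - g t) + Real.exp (t / μ) * (0 - g' t)) t := by
    intro t ht
    exact (((hasDerivAt_id t).div_const μ).exp).mul ((hasDerivAt_const t 1).sub (hg t ht))
  have hmono : MonotoneOn F (Ici (0:ℝ)) := by
    apply monotoneOn_of_deriv_nonneg (convex_Ici 0)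
    · exact fun t ht => (hFd t ht).continuousAt.continuousWithinAt
    · intro t ht
      rw [interior_Ici] at ht
      exact (hFd t (Set.mem_Ici.mpr (le_of_lt (Set.mem_Ioi.mp ht)))).differentiableAt.differentiableWithinAt
    · intro t ht
      rw [interior_Ici] at ht
      rw [(hFd t (Set.mem_Ici.mpr (le_of_lt (Set.mem_Ioi.mp ht)))).deriv]
      have h1 : Real.exp (t / μ) * (1 / μ) * (1 - g t) + Real.exp (t / μ) * (0 - g' t)
          = Real.exp (t / μ) / μ * (1 - g t - μ * g' t) := by field_simp; ring
      rw [h1]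
      exact mul_nonneg (le_of_lt (div_pos (Real.exp_pos _) hμ))
        (by have := hb t (le_of_lt ht); linarith)
  intro t ht
  have h2 := hmono (self_mem_Ici) ht ht
  have h3 : F 0 = 1 := by simp [hF, h0]
  rw [h3] at h2
  simp only [hF] at h2
  nlinarith [Real.exp_pos (t / μ)]

lemma aux_bound (μ a : ℝ) (hμ : 0 < μ) (ha : 0 < a) (f f' f'' : ℝ → ℝ)
    (hf : ∀ t, 0 ≤ t → HasDerivAt f (f' t) t)
    (hf' : ∀ t, 0 ≤ t → HasDerivAt f' (f'' t) t)
    (hode : ∀ t, 0 ≤ t → μ * f'' t + f' t + a * f t = 0)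
    (h0 : f 0 = 0) (h0' : f' 0 = 1 / μ) : ∀ t, 0 ≤ t → |f t| ≤ 1 := by
  set G : ℝ → ℝ := fun t => (f t + μ * f' t)^2 + μ * a * (f t)^2 with hG
  have hGd : ∀ t ∈ Ici (0:ℝ), HasDerivAt G (-2 * a * (f t)^2) t := by
    intro t ht
    have h1 : HasDerivAt (fun t => (f t + μ * f' t)^2)
        (2 * (f t + μ * f' t) ^ 1 * (f' t + μ * f'' t)) t :=
      (((hf t ht).add ((hf' t ht).const_mul μ)).pow 2)
    have h2 : HasDerivAt (fun t => μ * a * (f t)^2)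
        (μ * a * (2 * f t ^ 1 * f' t)) t := (((hf t ht).pow 2).const_mul (μ * a))
    have h3 := h1.add h2
    have h4 := hode t ht
    exact h3.congr_deriv (by linear_combination (2 * (f t + μ * f' t)) * h4)
  have hGanti : AntitoneOn G (Ici (0:ℝ)) := by
    apply antitoneOn_of_deriv_nonpos (convex_Ici 0)
    · exact fun t ht => (hGd t ht).continuousAt.continuousWithinAt
    · intro t ht
      rw [interior_Ici] at ht
      exact (hGd t (Set.mem_Ici.mpr (le_of_lt (Set.mem_Ioi.mp ht)))).differentiableAt.differentiableWithinAt
    · intro t ht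
      rw [interior_Ici] at ht
      rw [(hGd t (Set.mem_Ici.mpr (le_of_lt (Set.mem_Ioi.mp ht)))).deriv]
      nlinarith [sq_nonneg (f t)]
  have hG0 : G 0 = 1 := by
    simp only [hG, h0, h0']
    field_simp
    ring
  have hu : ∀ t, 0 ≤ t → (f t + μ * f' t)^2 ≤ 1 := by
    intro t ht
    have h5 := hGanti (self_mem_Ici) ht ht
    rw [hG0] at h5
    simp only [hG] at h5
    nlinarith [mul_nonneg (mul_pos hμ ha).le (sq_nonneg (f t))]
  have hup : ∀ t, 0 ≤ t → f t ≤ 1 := by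
    apply aux_upper μ hμ f f' hf _ h0
    intro t ht
    nlinarith [hu t ht]
  have hdown : ∀ t, 0 ≤ t → -f t ≤ 1 := by
    apply aux_upper μ hμ (fun t => -f t) (fun t => -f' t) (fun t ht => (hf t ht).neg) _ (by simp [h0])
    intro t ht
    show -f t + μ * -f' t ≤ 1
    nlinarith [hu t ht]
  intro t ht
  rw [abs_le]
  exact ⟨by linarith [hdown t ht], hup t ht⟩

theorem stmt_14 {H : Type*} [NormedAddCommGroup H] [InnerProductSpace ℝ H] [CompleteSpace H]
    (e : HilbertBasis ℕ ℝ H) (μ : ℝ) (hμ : 0 < μ)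
    (α : ℕ → ℝ) (hα : ∀ k, 0 < α k)
    (f f' f'' : ℕ → ℝ → ℝ)
    (hf : ∀ k t, 0 ≤ t → HasDerivAt (f k) (f' k t) t)
    (hf' : ∀ k t, 0 ≤ t → HasDerivAt (f' k) (f'' k t) t)
    (hode : ∀ k t, 0 ≤ t → μ * f'' k t + f' k t + α k * f k t = 0)
    (h0 : ∀ k, f k 0 = 0) (h0' : ∀ k, f' k 0 = 1 / μ)
    (T : ℝ → H →L[ℝ] H)
    (hT : ∀ t k, T t (e k) = f k t • e k) :
    ∀ t, 0 ≤ t → ‖T t‖ ≤ 4 := by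
  intro t ht
  have hb : ∀ k, |f k t| ≤ 1 := fun k =>
    aux_bound μ (α k) hμ (hα k) (f k) (f' k) (f'' k) (hf k) (hf' k) (hode k) (h0 k) (h0' k) t ht
  apply ContinuousLinearMap.opNorm_le_bound _ (by norm_num)
  intro x
  -- the set where the bound holds is closed and contains the dense span of the basis
  have hclosed : IsClosed {y : H | ‖T t y‖ ≤ 4 * ‖y‖} :=
    isClosed_le ((T t).continuous.norm) (continuous_const.mul continuous_norm)
  have hspan : (Submodule.span ℝ (Set.range e) : Set H) ⊆ {y : H | ‖T t y‖ ≤ 4 * ‖y‖} := by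
    intro y hy
    rw [SetLike.mem_coe, Finsupp.mem_span_range_iff_exists_finsupp] at hy
    obtain ⟨c, rfl⟩ := hy
    rw [Finsupp.sum]
    simp only [Set.mem_setOf_eq, map_sum]
    have hTy : ∀ i ∈ c.support, T t (c i • e i) = (c i * f i t) • e i := by
      intro i _
      rw [map_smul, hT, smul_smul]
    rw [Finset.sum_congr rfl hTy]
    have h1 : ‖∑ i ∈ c.support, (c i * f i t) • e i‖ ^ 2
        = ∑ i ∈ c.support, (c i * f i t) ^ 2 := by
      rw [← real_inner_self_eq_norm_sq, e.orthonormal.inner_sum]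
      simp [sq]
    have h2 : ‖∑ i ∈ c.support, c i • e i‖ ^ 2 = ∑ i ∈ c.support, (c i) ^ 2 := by
      rw [← real_inner_self_eq_norm_sq, e.orthonormal.inner_sum]
      simp [sq]
    have h3 : ∑ i ∈ c.support, (c i * f i t) ^ 2 ≤ ∑ i ∈ c.support, (c i) ^ 2 := by
      apply Finset.sum_le_sum
      intro i _
      have h4 : f i t ^ 2 ≤ 1 := by
        nlinarith [sq_abs (f i t), abs_nonneg (f i t), hb i]
      calc (c i * f i t) ^ 2 = c i ^ 2 * f i t ^ 2 := by ring
        _ ≤ c i ^ 2 * 1 := mul_le_mul_of_nonneg_left h4 (sq_nonneg _)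
        _ = c i ^ 2 := mul_one _
    nlinarith [norm_nonneg (∑ i ∈ c.support, (c i * f i t) • e i),
      norm_nonneg (∑ i ∈ c.support, c i • e i), h1 ▸ h3.trans h2.ge]
  have hx : x ∈ closure (Submodule.span ℝ (Set.range e) : Set H) := by
    rw [← Submodule.topologicalClosure_coe, e.dense_span]
    trivial
  exact closure_minimal hspan hclosed hx
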